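/- arXiv:1707.03542 — 2 statements merged into one kernel-verified Lean document; each statement's English description precedes it below -/
import Mathlib

section
/- Let μ ∈ ℝ and σ > 0, r ≥ 0, and define h(x) = μx - (σ²/2)x² - r·max(x-1, 0). If μ - σ² ≥ r, then h attains its global maximum over ℝ at x* = (μ - r)/σ², with maximum value h(x*) = r + (μ - r)²/(2σ²). -/
theorem stmt_0 (μ σ r : ℝ) (hσ : 0 < σ) (hr : 0 ≤ r) (hcase : μ - σ^2 ≥ r)
    (h : ℝ → ℝ) (hdef : ∀ x, h x = μ * x - σ^2 / 2 * x^2 - r * max (x - 1) 0) :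
    (∀ x : ℝ, h x ≤ h ((μ - r) / σ^2)) ∧ h ((μ - r) / σ^2) = r + (μ - r)^2 / (2 * σ^2) := by
  have hs : (0:ℝ) < σ^2 := by positivity
  set t : ℝ := (μ - r) / σ^2 with htdef
  have hts : t * σ^2 = μ - r := div_mul_cancel₀ _ (ne_of_gt hs)
  have ht1 : 1 ≤ t := by
    rw [htdef, le_div_iff₀ hs]
    linarith
  have hmaxt : max (t - 1) 0 = t - 1 := max_eq_left (by linarith)
  have key : (μ - r)^2 / (2 * σ^2) * (2 * σ^2) = (μ - r)^2 :=
    div_mul_cancel₀ _ (by positivity)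
  have hval : h t = r + (μ - r)^2 / (2 * σ^2) := by
    rw [hdef, hmaxt]
    have h2 : (2:ℝ) * σ^2 ≠ 0 := by positivity
    field_simp [htdef]
    linear_combination (μ - r - t * σ^2) * hts
  refine ⟨fun x => ?_, hval⟩
  rw [hdef, hval]
  rcases le_or_gt x 1 with hx | hx
  · have hmx : max (x - 1) 0 = 0 := max_eq_right (by linarith)
    rw [hmx]
    nlinarith [sq_nonneg (x * σ^2 - (μ - r)), key, hs, mul_nonneg hr (sub_nonneg.mpr hx), mul_nonneg (mul_nonneg hr (sub_nonneg.mpr hx)) hs.le]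
  · have hmx : max (x - 1) 0 = x - 1 := max_eq_left (by linarith)
    rw [hmx]
    nlinarith [sq_nonneg (x * σ^2 - (μ - r)), key, hs]
end

section
/- Let μ ≥ σ² > 0, λ ≥ 0, and define f : [0,∞) → ℝ by f(r) = (1-λ)(μ-r)²/(2σ²) for 0 ≤ r ≤ μ - σ², and f(r) = μ - (σ²/2)(1+λ) for r ≥ μ - σ². Set λ* = 1 - 2σ²/(μ + σ²). Then f(0) > f(μ - σ²) if and only if λ < λ*. -/
theorem stmt_12 (μ σ lam : ℝ) (hσ : 0 < σ) (hμ : σ^2 ≤ μ) (hlam : 0 ≤ lam)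
    (f : ℝ → ℝ)
    (hdef : ∀ r, f r =
      if r < μ - σ^2 then (1 - lam) * (μ - r)^2 / (2 * σ^2)
      else μ - σ^2 / 2 * (1 + lam)) :
    f 0 > f (μ - σ^2) ↔ lam < 1 - 2 * σ^2 / (μ + σ^2) := by
  have hσ2 : 0 < σ^2 := by positivity
  have hsum : 0 < μ + σ^2 := by linarith
  rw [hdef 0, hdef (μ - σ^2)]
  simp only [lt_irrefl, if_false, sub_zero]
  rcases eq_or_lt_of_le hμ with h | h
  · rw [if_neg (by linarith)]
    constructor
    · intro hc; exact absurd hc (lt_irrefl _)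
    · intro hc
      exfalso
      rw [← h] at hc
      have : (1:ℝ) - 2 * σ^2 / (σ^2 + σ^2) = 0 := by
        field_simp; ring
      rw [this] at hc; linarith
  · rw [if_pos (by linarith)]
    rw [gt_iff_lt, lt_div_iff₀ (by positivity : (0:ℝ) < 2*σ^2)]
    have key : (1 : ℝ) - 2 * σ^2 / (μ + σ^2) = (μ - σ^2) / (μ + σ^2) := by
      field_simp; ring
    rw [key, lt_div_iff₀ hsum]
    constructor
    · intro hc; nlinarith
    · intro hc; nlinarith
end
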